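/- If, conditional on treatment assignment, observations in distinct treatment groups are independent, then the matched averages Ỹ^t(w) and Ỹ^t(w') are independent random variables for any two distinct treatments w ≠ w', where the matching of units and the counts ψ_{it} are measurable functions of the covariates and treatment assignments only. -/

import Mathlib

open Finset MeasureTheory ProbabilityTheory

/-- Lemma 1: If, conditional on the (deterministic, given `(X,W)`)
treatment assignment, the outcomes of distinct units are independent, then the matched
averages `Ỹ^t(w) = (1/n_t) ∑_i T i w (T i t + ψ i t / m) Yobs i` and `Ỹ^t(w')` are
independent for `w ≠ w'`, since each is a deterministic weighted sum over outcomes from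
its own treatment group, and the weights (hence matches and counts `ψ i t`) are
functions of the covariates and treatment assignments only. -/
theorem matched_averages_independent {Ω : Type*} [MeasurableSpace Ω]
    (μ : Measure Ω) [IsProbabilityMeasure μ] {n Z : ℕ}
    (W : Fin n → Fin Z) (Y : Fin n → Ω → ℝ)
    (hmeas : ∀ i, Measurable (Y i))
    (hindep : iIndepFun Y μ)
    (m : ℕ) (hm : 0 < m) (T : Fin n → Fin Z → ℝ)
    (hT : ∀ i v, T i v = if W i = v then 1 else 0)
    (ψ : Fin n → Fin Z → ℝ) (nt : ℝ)
    (t w w' : Fin Z) (hww' : w ≠ w') :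
    IndepFun
      (fun ω => (1 / nt) * ∑ i : Fin n, T i w * (T i t + ψ i t / (m : ℝ)) * Y i ω)
      (fun ω => (1 / nt) * ∑ i : Fin n, T i w' * (T i t + ψ i t / (m : ℝ)) * Y i ω)
      μ := by
  set c : Fin n → ℝ := fun i => T i t + ψ i t / (m : ℝ) with hc
  set S : Finset (Fin n) := univ.filter (fun i => W i = w) with hS
  set S' : Finset (Fin n) := univ.filter (fun i => W i = w') with hS'
  have hdisj : Disjoint S S' := by
    simp only [hS, hS', disjoint_filter]
    intro i _ h1 h2
    exact hww' (h1 ▸ h2)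
  have h := hindep.indepFun_finset S S' hdisj hmeas
  have key : ∀ (v : Fin Z) (SS : Finset (Fin n)),
      SS = univ.filter (fun i => W i = v) →
      (fun ω => (1 / nt) * ∑ i : Fin n, T i v * c i * Y i ω) =
      (fun f : SS → ℝ => (1 / nt) * ∑ i : SS, c i * f i) ∘
        (fun ω (i : SS) => Y i ω) := by
    intro v SS hSS
    funext ω
    simp only [Function.comp]
    congr 1
    rw [Finset.sum_coe_sort SS (fun i => c i * Y i ω)]
    rw [← Finset.sum_filter_of_ne (f := fun i => T i v * c i * Y i ω)
      (p := fun i => W i = v) (by intro i _ h; by_contra hne; simp [hT, hne] at h)]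
    rw [show univ.filter (fun i => W i = v) = SS from hSS.symm]
    refine Finset.sum_congr rfl fun i hi => ?_
    have : W i = v := by rw [hSS] at hi; simpa using hi
    simp [hT, this]
  have hmS : Measurable (fun f : S → ℝ => (1 / nt) * ∑ i : S, c i * f i) := by
    apply Measurable.const_mul
    exact Finset.measurable_sum _ fun i _ => (measurable_pi_apply _).const_mul _
  have hmS' : Measurable (fun f : S' → ℝ => (1 / nt) * ∑ i : S', c i * f i) := by
    apply Measurable.const_mul
    exact Finset.measurable_sum _ fun i _ => (measurable_pi_apply _).const_mul _
  rw [key w S hS, key w' S' hS']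
  exact h.comp hmS hmS'
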